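/- Let f : ℝⁿ → ℝ be p-times continuously differentiable (p ≥ 2) with ‖∇ᵖf(x) − ∇ᵖf(y)‖ ≤ (p−1)!·L·‖x−y‖ for all x, y. Then for all x, s ∈ ℝⁿ, ‖∇²f(x+s) − ∇²_s T_p(x,s)‖ ≤ (p−1)·L·‖s‖^{p−1}, where the norm on symmetric matrices is the operator norm induced by the Euclidean norm. -/

import Mathlib

open scoped BigOperators

/-- The degree-`p` Taylor polynomial of `f` at `x`, evaluated at increment `s`. -/
noncomputable def taylorP {n : ℕ} (p : ℕ) (f : EuclideanSpace ℝ (Fin n) → ℝ)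
    (x s : EuclideanSpace ℝ (Fin n)) : ℝ :=
  ∑ j ∈ Finset.range (p + 1),
    (1 / (j.factorial : ℝ)) * iteratedFDeriv ℝ j f x (fun _ => s)

open Function Equiv Finset


section Symmetry
variable {E : Type*} [NormedAddCommGroup E] [NormedSpace ℝ E]

/-- Symmetry of iterated derivatives of `C^k` functions. -/
lemma iteratedFDeriv_perm_invariant :
    ∀ (k : ℕ) {F : Type*} [NormedAddCommGroup F] [NormedSpace ℝ F] (f : E → F),
    ContDiff ℝ (k : ℕ∞) f → ∀ (x : E) (σ : Equiv.Perm (Fin k)) (v : Fin k → E),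
    iteratedFDeriv ℝ k f x (v ∘ σ) = iteratedFDeriv ℝ k f x v := by
  intro k
  induction k with
  | zero =>
    intro F _ _ f hf x σ v
    congr 1; funext i; exact i.elim0
  | succ k IH =>
    intro F _ _ f hf x σ v
    -- Claim A : invariance under permutations fixing `0`.
    have claimA : ∀ (ρ : Equiv.Perm (Fin (k+1))), ρ 0 = 0 → ∀ (w : Fin (k+1) → E),
        iteratedFDeriv ℝ (k+1) f x (w ∘ ρ) = iteratedFDeriv ℝ (k+1) f x w := by
      intro ρ hρ w
      obtain ⟨q, σ'⟩ : ∃ q : Fin (k+1) × Equiv.Perm (Fin k), Equiv.Perm.decomposeFin.symm q = ρ :=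
        ⟨Equiv.Perm.decomposeFin ρ, Equiv.symm_apply_apply _ _⟩
      obtain ⟨p0, τ⟩ := q
      have hp0 : p0 = 0 := by
        have := Equiv.Perm.decomposeFin_symm_apply_zero p0 τ
        rw [σ'] at this; rw [← this, hρ]
      subst hp0
      have hsucc : ∀ i : Fin k, ρ i.succ = (τ i).succ := by
        intro i
        rw [← σ', Equiv.Perm.decomposeFin_symm_apply_succ, Equiv.swap_self, Equiv.coe_refl, id_eq]
      rw [iteratedFDeriv_succ_apply_left, iteratedFDeriv_succ_apply_left]
      have h0 : (w ∘ ρ) 0 = w 0 := by simp [hρ]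
      have htail : Fin.tail (w ∘ ρ) = (Fin.tail w) ∘ τ := by
        funext i
        simp only [Fin.tail, comp_apply, hsucc]
      rw [h0, htail]
      set A := (ContinuousMultilinearMap.domDomCongrₗᵢ ℝ E F τ) with hA
      have hcomp : (⇑A) ∘ (iteratedFDeriv ℝ k f) = iteratedFDeriv ℝ k f := by
        funext y
        ext m
        show (ContinuousMultilinearMap.domDomCongr τ (iteratedFDeriv ℝ k f y)) m
            = iteratedFDeriv ℝ k f y m
        rw [ContinuousMultilinearMap.domDomCongr_apply]
        exact IH f (hf.of_le (by exact_mod_cast Nat.le_succ k)) y τ m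
      have hfd := LinearIsometryEquiv.comp_fderiv A (f := iteratedFDeriv ℝ k f) (x := x)
      rw [hcomp] at hfd
      have happ : ∀ m : Fin k → E, fderiv ℝ (iteratedFDeriv ℝ k f) x (w 0) m
          = fderiv ℝ (iteratedFDeriv ℝ k f) x (w 0) (m ∘ τ) := by
        intro m
        conv_lhs => rw [hfd]
        rfl
      exact (happ (Fin.tail w)).symm
    -- Claim B : invariance under the transposition of `0` and `1` (needs `k ≥ 1`).
    have claimB : ∀ (w : Fin (k+1) → E),
        iteratedFDeriv ℝ (k+1) f x (w ∘ Equiv.swap 0 1) = iteratedFDeriv ℝ (k+1) f x w := by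
      rcases k with _ | K
      · intro w
        congr 1
        funext i
        fin_cases i
        simp [Equiv.swap_apply_of_ne_of_ne]
      intro w
      -- key formula for the (K+2)-nd derivative in terms of the second derivative of the K-th.
      have key : ∀ (w : Fin (K+2) → E), iteratedFDeriv ℝ (K+2) f x w =
          fderiv ℝ (fderiv ℝ (iteratedFDeriv ℝ K f)) x (w 0) (w 1)
            (fun i : Fin K => w i.succ.succ) := by
        intro w
        rw [iteratedFDeriv_succ_apply_left]
        have h1 : iteratedFDeriv ℝ (K+1) f =
            ⇑(continuousMultilinearCurryLeftEquiv ℝ (fun _ : Fin (K + 1) => E) F).symm ∘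
              fderiv ℝ (iteratedFDeriv ℝ K f) := iteratedFDeriv_succ_eq_comp_left
        rw [h1]
        rw [LinearIsometryEquiv.comp_fderiv (𝕜 := ℝ)
          (iso := (continuousMultilinearCurryLeftEquiv ℝ (fun _ : Fin (K + 1) => E) F).symm)
          (f := fderiv ℝ (iteratedFDeriv ℝ K f)) (x := x)]
        rfl
      rw [key, key]
      have hsymm : IsSymmSndFDerivAt ℝ (iteratedFDeriv ℝ K f) x := by
        apply ContDiffAt.isSymmSndFDerivAt (n := 2)
        · exact (hf.iteratedFDeriv_right (i := K) (by
            push_cast; norm_num; rw [add_comm]; norm_cast)).contDiffAt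
        · simp
      have h0 : (w ∘ Equiv.swap 0 1) 0 = w 1 := by simp
      have h1 : (w ∘ Equiv.swap 0 1) 1 = w 0 := by simp
      have h2 : (fun i : Fin K => (w ∘ Equiv.swap 0 1) i.succ.succ)
          = fun i : Fin K => w i.succ.succ := by
        funext i
        have : Equiv.swap (0 : Fin (K+2)) 1 i.succ.succ = i.succ.succ := by
          apply Equiv.swap_apply_of_ne_of_ne
          · exact (Fin.succ_ne_zero _)
          · simp [Fin.ext_iff]
        simp [this]
      rw [h0, h1, h2, hsymm.eq]
    -- general case by decomposition
    have claimSwap : ∀ (b : Fin (k+1)) (w : Fin (k+1) → E),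
        iteratedFDeriv ℝ (k+1) f x (w ∘ Equiv.swap 0 b) = iteratedFDeriv ℝ (k+1) f x w := by
      intro b w
      rcases eq_or_ne b 0 with hb | hb
      · subst hb
        rw [Equiv.swap_self]
        congr 1
      · rcases Nat.eq_zero_or_pos k with hk | hk
        · subst hk
          exact absurd (by omega : b = 0) hb
        have h01 : (0 : Fin (k+1)) ≠ 1 := by
          intro h
          have h2 := congrArg Fin.val h
          rw [Fin.val_zero, Fin.val_one', Nat.mod_eq_of_lt (by omega)] at h2
          omega
        set c : Equiv.Perm (Fin (k+1)) := Equiv.swap 1 b with hc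
        have hc0 : c 0 = 0 := by
          apply Equiv.swap_apply_of_ne_of_ne
          · exact h01
          · exact (Ne.symm hb)
        have hdecomp : Equiv.swap (0 : Fin (k+1)) b = c * Equiv.swap 0 1 * c⁻¹ := by
          have h01 : c 1 = b := Equiv.swap_apply_left 1 b
          have h00 : Equiv.swap (c 0) (c 1) = c * Equiv.swap 0 1 * c⁻¹ :=
            Equiv.swap_apply_apply c 0 1
          rw [hc0, h01] at h00
          exact h00
        rw [hdecomp, Equiv.swap_inv]
        have hmul : ∀ (a b' : Equiv.Perm (Fin (k+1))) (u : Fin (k+1) → E),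
            u ∘ ⇑(a * b') = (u ∘ ⇑a) ∘ ⇑b' := by
          intro a b' u; rfl
        rw [hmul, hmul]
        rw [claimA c hc0, claimB, claimA c hc0]
    -- decompose σ
    obtain ⟨⟨b, τ⟩, hdec⟩ : ∃ q : Fin (k+1) × Equiv.Perm (Fin k),
        Equiv.Perm.decomposeFin.symm q = σ :=
      ⟨Equiv.Perm.decomposeFin σ, Equiv.symm_apply_apply _ _⟩
    set ρ : Equiv.Perm (Fin (k+1)) := Equiv.Perm.decomposeFin.symm (0, τ) with hρdef
    have hρ0 : ρ 0 = 0 := Equiv.Perm.decomposeFin_symm_apply_zero 0 τ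
    have hcompose : v ∘ ⇑σ = ((v ∘ ⇑(Equiv.swap 0 b)) ∘ ⇑ρ) := by
      funext i
      induction i using Fin.cases with
      | zero =>
        have h1 : σ 0 = b := by rw [← hdec]; exact Equiv.Perm.decomposeFin_symm_apply_zero b τ
        simp only [comp_apply, h1, hρ0]
        rw [Equiv.swap_apply_left]
      | succ i =>
        have h1 : σ i.succ = Equiv.swap 0 b (τ i).succ := by
          rw [← hdec]; exact Equiv.Perm.decomposeFin_symm_apply_succ τ b i
        have h2 : ρ i.succ = (τ i).succ := by
          rw [hρdef]
          rw [Equiv.Perm.decomposeFin_symm_apply_succ, Equiv.swap_self, Equiv.coe_refl, id_eq]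
        simp only [comp_apply, h1, h2]
    rw [hcompose, claimA ρ hρ0, claimSwap b v]
end Symmetry


section Vec
variable {E : Type*} [NormedAddCommGroup E] [NormedSpace ℝ E]

/-- The vector `(s, ..., s, u, v)` with `m` copies of `s`. -/
def dvec (m : ℕ) (s u v : E) : Fin (m+2) → E :=
  Fin.snoc (Fin.snoc (fun _ : Fin m => s) u) v

lemma dvec_cons (m : ℕ) (s u v : E) :
    Fin.cons s (dvec m s u v) = dvec (m+1) s u v := by
  have hdiag : (Fin.cons s (fun _ : Fin m => s) : Fin (m+1) → E) = fun _ => s := by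
    funext i; induction i using Fin.cases <;> simp
  unfold dvec
  rw [Fin.cons_snoc_eq_snoc_cons, Fin.cons_snoc_eq_snoc_cons, hdiag]

lemma prod_norm_dvec (m : ℕ) (s u v : E) :
    ∏ i, ‖dvec m s u v i‖ = ‖s‖^m * ‖u‖ * ‖v‖ := by
  unfold dvec
  rw [Fin.prod_univ_castSucc]
  simp only [Fin.snoc_castSucc, Fin.snoc_last]
  rw [Fin.prod_univ_castSucc]
  simp only [Fin.snoc_castSucc, Fin.snoc_last, Finset.prod_const, Finset.card_univ,
    Fintype.card_fin]

lemma snoc_update_diag_eq (r : ℕ) (s u v : E) (i : Fin (r+1)) :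
    Fin.snoc (Function.update (fun _ : Fin (r+1) => s) i u) v
      = (dvec r s u v) ∘ ⇑(Equiv.swap i.castSucc ((Fin.last r).castSucc)) := by
  funext j
  induction j using Fin.lastCases with
  | last =>
    have h1 : Equiv.swap i.castSucc ((Fin.last r).castSucc) (Fin.last (r+1)) = Fin.last (r+1) :=
      Equiv.swap_apply_of_ne_of_ne (Fin.castSucc_lt_last i).ne' (Fin.castSucc_lt_last _).ne'
    simp [Fin.snoc_last, h1, dvec]
  | cast j =>
    rw [Fin.snoc_castSucc, comp_apply]
    rcases eq_or_ne j i with rfl | hji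
    · rw [Function.update_self, Equiv.swap_apply_left]
      simp [dvec, Fin.snoc_castSucc, Fin.snoc_last]
    · rw [Function.update_of_ne hji]
      rcases eq_or_ne j (Fin.last r) with rfl | hjl
      · rw [Equiv.swap_apply_right]
        have hi : i ≠ Fin.last r := fun h => hji h.symm
        have : dvec r s u v i.castSucc = (Fin.snoc (fun _ : Fin r => s) u : Fin (r+1) → E) i := by
          simp [dvec, Fin.snoc_castSucc]
        rw [this, ← Fin.castSucc_castPred i hi, Fin.snoc_castSucc]
      · have hswap : Equiv.swap i.castSucc ((Fin.last r).castSucc) j.castSucc = j.castSucc :=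
          Equiv.swap_apply_of_ne_of_ne (by simpa [Fin.castSucc_inj] using hji)
            (by simpa [Fin.castSucc_inj] using hjl)
        rw [hswap]
        have : dvec r s u v j.castSucc = (Fin.snoc (fun _ : Fin r => s) u : Fin (r+1) → E) j := by
          simp [dvec, Fin.snoc_castSucc]
        rw [this, ← Fin.castSucc_castPred j hjl, Fin.snoc_castSucc]

lemma dvec_zero_eq (s : E) (m : Fin 2 → E) : m = dvec 0 s (m 0) (m 1) := by
  funext j
  fin_cases j <;> simp [dvec, Fin.snoc]

/-- derivative of a monomial `y ↦ M (y, ..., y)`. -/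
lemma mono_hasFDerivAt {F : Type*} [NormedAddCommGroup F] [NormedSpace ℝ F] (m : ℕ)
    (M : ContinuousMultilinearMap ℝ (fun _ : Fin m => E) F) (s : E) :
    HasFDerivAt (fun y : E => M (fun _ => y))
      ((M.linearDeriv (fun _ => s)).comp
        (ContinuousLinearMap.pi fun _ : Fin m => ContinuousLinearMap.id ℝ E)) s := by
  have h2 : HasFDerivAt (fun y : E => (fun _ : Fin m => y))
      (ContinuousLinearMap.pi fun _ : Fin m => ContinuousLinearMap.id ℝ E) s :=
    (ContinuousLinearMap.pi fun _ : Fin m => ContinuousLinearMap.id ℝ E).hasFDerivAt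
  exact (M.hasFDerivAt (fun _ : Fin m => s)).comp s h2

/-- evaluation of the derivative of a symmetric monomial. -/
lemma linearDeriv_diag_apply {F : Type*} [NormedAddCommGroup F] [NormedSpace ℝ F] (m : ℕ)
    (M : ContinuousMultilinearMap ℝ (fun _ : Fin (m+1) => E) F)
    (hsym : ∀ (σ : Equiv.Perm (Fin (m+1))) (w : Fin (m+1) → E), M (w ∘ σ) = M w)
    (s u : E) :
    M.linearDeriv (fun _ => s) (fun _ => u) = (m+1) • M (Fin.snoc (fun _ : Fin m => s) u) := by
  rw [ContinuousMultilinearMap.linearDeriv_apply]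
  have hterm : ∀ i : Fin (m+1),
      M (Function.update (fun _ => s) i u) = M (Fin.snoc (fun _ : Fin m => s) u) := by
    intro i
    have hupd : Function.update (fun _ : Fin (m+1) => s) i u
        = (Fin.snoc (fun _ : Fin m => s) u) ∘ ⇑(Equiv.swap i (Fin.last m)) := by
      funext j
      rcases eq_or_ne j i with rfl | hji
      · rw [Function.update_self, comp_apply, Equiv.swap_apply_left, Fin.snoc_last]
      · rw [Function.update_of_ne hji, comp_apply]
        rcases eq_or_ne j (Fin.last m) with rfl | hjl
        · rw [Equiv.swap_apply_right]
          have hi : i ≠ Fin.last m := fun h => hji h.symm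
          rw [← Fin.castSucc_castPred i hi, Fin.snoc_castSucc]
        · rw [Equiv.swap_apply_of_ne_of_ne hji hjl, ← Fin.castSucc_castPred j hjl,
            Fin.snoc_castSucc]
    rw [hupd, hsym]
  calc (∑ i, M (Function.update (fun _ => s) i u))
      = ∑ _i : Fin (m+1), M (Fin.snoc (fun _ : Fin m => s) u) := by
        exact Finset.sum_congr rfl (fun i _ => hterm i)
    _ = (m+1) • M (Fin.snoc (fun _ : Fin m => s) u) := by
        rw [Finset.sum_const, Finset.card_univ, Fintype.card_fin]

end Vec

section Taylor
variable {n : ℕ}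

lemma taylor_hessian (P : ℕ) (f : EuclideanSpace ℝ (Fin n) → ℝ) (x : EuclideanSpace ℝ (Fin n))
    (hsym : ∀ (j : ℕ), j ≤ P + 2 → ∀ (σ : Equiv.Perm (Fin j)) (w : Fin j → EuclideanSpace ℝ (Fin n)),
      iteratedFDeriv ℝ j f x (w ∘ σ) = iteratedFDeriv ℝ j f x w)
    (s : EuclideanSpace ℝ (Fin n)) (m : Fin 2 → EuclideanSpace ℝ (Fin n)) :
    iteratedFDeriv ℝ 2 (fun s' => taylorP (P+2) f x s') s m
      = ∑ r ∈ Finset.range (P+1),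
          (1 / (r.factorial : ℝ)) * iteratedFDeriv ℝ (r+2) f x (dvec r s (m 0) (m 1)) := by
  set Mj : ∀ j : ℕ, ContinuousMultilinearMap ℝ (fun _ : Fin j => EuclideanSpace ℝ (Fin n)) ℝ :=
    fun j => iteratedFDeriv ℝ j f x with hMj
  set S1 : EuclideanSpace ℝ (Fin n) → (EuclideanSpace ℝ (Fin n) →L[ℝ] ℝ) := fun s' =>
    ∑ q ∈ Finset.range (P+2),
      ((1 : ℝ)/(q.factorial : ℝ)) • (((Mj (q+1)).curryRight) (fun _ : Fin q => s')) with hS1def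
  -- first derivative of the Taylor polynomial
  have hT1 : ∀ s' : EuclideanSpace ℝ (Fin n),
      HasFDerivAt (fun y => taylorP (P+2) f x y) (S1 s') s' := by
    intro s'
    have h0 : HasFDerivAt (fun y => taylorP (P+2) f x y)
        (∑ j ∈ Finset.range (P+3), ((1 : ℝ)/(j.factorial : ℝ)) •
          (((Mj j).linearDeriv (fun _ => s')).comp
            (ContinuousLinearMap.pi fun _ : Fin j =>
              ContinuousLinearMap.id ℝ (EuclideanSpace ℝ (Fin n))))) s' := by
      unfold taylorP
      apply HasFDerivAt.fun_sum
      intro j hj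
      exact (mono_hasFDerivAt j (Mj j) s').const_mul _
    convert h0 using 1
    rw [Finset.sum_range_succ']
    have hzero : ((1 : ℝ)/((Nat.factorial 0 : ℕ) : ℝ)) •
        (((Mj 0).linearDeriv (fun _ => s')).comp
          (ContinuousLinearMap.pi fun _ : Fin 0 =>
            ContinuousLinearMap.id ℝ (EuclideanSpace ℝ (Fin n)))) = 0 := by
      ext u
      simp [ContinuousMultilinearMap.linearDeriv_apply]
    rw [hzero, add_zero]
    simp only [hS1def]
    apply Finset.sum_congr rfl
    intro q hq
    ext u
    rw [ContinuousLinearMap.smul_apply, ContinuousLinearMap.smul_apply,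
      ContinuousLinearMap.comp_apply]
    have hdiag : (ContinuousLinearMap.pi fun _ : Fin (q+1) =>
        ContinuousLinearMap.id ℝ (EuclideanSpace ℝ (Fin n))) u = fun _ => u := rfl
    rw [hdiag, linearDeriv_diag_apply q (Mj (q+1))
        (hsym (q+1) (by have := Finset.mem_range.mp hq; omega)) s' u,
      ContinuousMultilinearMap.curryRight_apply]
    have hfac : ((q+1).factorial : ℝ) = ((q:ℝ)+1) * (q.factorial : ℝ) := by
      exact_mod_cast Nat.factorial_succ q
    have hq0 : (q.factorial : ℝ) ≠ 0 := by exact_mod_cast q.factorial_ne_zero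
    rw [nsmul_eq_mul, smul_eq_mul, smul_eq_mul, hfac]
    push_cast
    field_simp
  have hfderivT : (fderiv ℝ (fun y => taylorP (P+2) f x y)) = S1 :=
    funext fun s' => (hT1 s').fderiv
  -- second derivative
  set S2 : EuclideanSpace ℝ (Fin n) →L[ℝ] EuclideanSpace ℝ (Fin n) →L[ℝ] ℝ :=
    ∑ q ∈ Finset.range (P+2),
      ((1 : ℝ)/(q.factorial : ℝ)) •
        ((((Mj (q+1)).curryRight).linearDeriv (fun _ : Fin q => s)).comp
          (ContinuousLinearMap.pi fun _ : Fin q =>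
            ContinuousLinearMap.id ℝ (EuclideanSpace ℝ (Fin n)))) with hS2def
  have hS2 : HasFDerivAt S1 S2 s := by
    apply HasFDerivAt.fun_sum
    intro q hq
    exact (mono_hasFDerivAt q ((Mj (q+1)).curryRight) s).const_smul ((1 : ℝ)/(q.factorial : ℝ))
  have key : iteratedFDeriv ℝ 2 (fun s' => taylorP (P+2) f x s') s m = S2 (m 0) (m 1) := by
    rw [iteratedFDeriv_two_apply, hfderivT, hS2.fderiv]
  rw [key, hS2def, ContinuousLinearMap.sum_apply, ContinuousLinearMap.sum_apply,
    Finset.sum_range_succ']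
  have hzero : ((((1 : ℝ)/((Nat.factorial 0 : ℕ) : ℝ)) •
      ((((Mj 1).curryRight).linearDeriv (fun _ : Fin 0 => s)).comp
        (ContinuousLinearMap.pi fun _ : Fin 0 =>
          ContinuousLinearMap.id ℝ (EuclideanSpace ℝ (Fin n))))) (m 0)) (m 1) = 0 := by
    simp [ContinuousMultilinearMap.linearDeriv_apply]
  rw [hzero, add_zero]
  apply Finset.sum_congr rfl
  intro r hr
  rw [ContinuousLinearMap.smul_apply, ContinuousLinearMap.smul_apply,
    ContinuousLinearMap.comp_apply]
  have hdiag : (ContinuousLinearMap.pi fun _ : Fin (r+1) =>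
      ContinuousLinearMap.id ℝ (EuclideanSpace ℝ (Fin n))) (m 0) = fun _ => (m 0) := rfl
  rw [hdiag, ContinuousMultilinearMap.linearDeriv_apply, ContinuousLinearMap.sum_apply]
  have hterm : ∀ i : Fin (r+1),
      ((Mj (r+2)).curryRight (Function.update (fun _ => s) i (m 0))) (m 1)
        = Mj (r+2) (dvec r s (m 0) (m 1)) := by
    intro i
    rw [ContinuousMultilinearMap.curryRight_apply, snoc_update_diag_eq r s (m 0) (m 1) i,
      hsym (r+2) (by have := Finset.mem_range.mp hr; omega)]
  calc (((1 : ℝ)/((r+1).factorial : ℝ)) •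
        ∑ i : Fin (r+1), ((Mj (r+2)).curryRight (Function.update (fun _ => s) i (m 0))) (m 1))
      = ((1 : ℝ)/((r+1).factorial : ℝ)) •
          ∑ _i : Fin (r+1), Mj (r+2) (dvec r s (m 0) (m 1)) := by
        congr 1
        exact Finset.sum_congr rfl (fun i _ => hterm i)
    _ = ((1 : ℝ)/((r+1).factorial : ℝ)) *
          ((r+1) • Mj (r+2) (dvec r s (m 0) (m 1))) := by
        rw [Finset.sum_const, Finset.card_univ, Fintype.card_fin, smul_eq_mul]
    _ = (1 / (r.factorial : ℝ)) * Mj (r+2) (dvec r s (m 0) (m 1)) := by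
        have hfac : ((r+1).factorial : ℝ) = ((r:ℝ)+1) * (r.factorial : ℝ) := by
          exact_mod_cast Nat.factorial_succ r
        have hr0 : (r.factorial : ℝ) ≠ 0 := by exact_mod_cast r.factorial_ne_zero
        rw [nsmul_eq_mul, hfac]
        push_cast
        field_simp

section DerivBound
variable {E : Type*} [NormedAddCommGroup E] [NormedSpace ℝ E]

lemma deriv_bound (P : ℕ) (f : E → ℝ) (L : ℝ) (hL : 0 ≤ L)
    (hf : ContDiff ℝ ((P + 2 : ℕ) : ℕ∞) f)
    (hLip : ∀ x y : E, ‖iteratedFDeriv ℝ (P+2) f x - iteratedFDeriv ℝ (P+2) f y‖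
      ≤ (((P+1).factorial : ℝ)) * L * ‖x - y‖)
    (x s u v : E) :
    |iteratedFDeriv ℝ 2 f (x + s) (dvec 0 s u v)
      - ∑ r ∈ Finset.range (P+1),
          (1/(r.factorial:ℝ)) * iteratedFDeriv ℝ (r+2) f x (dvec r s u v)|
      ≤ L * ‖s‖^(P+1) * ‖u‖ * ‖v‖ := by
  set C : ℝ := ((P+1).factorial : ℝ) * L * ‖s‖^(P+1) * ‖u‖ * ‖v‖ with hC
  have hCnonneg : 0 ≤ C := by positivity
  set φ : ℕ → ℝ → ℝ := fun i t => iteratedFDeriv ℝ (i+2) f (x + t • s) (dvec i s u v) with hφ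
  -- derivative of φ i
  have hφd : ∀ i, i < P → ∀ t : ℝ, HasDerivAt (φ i) (φ (i+1) t) t := by
    intro i hi t
    have hy : HasDerivAt (fun t : ℝ => x + t • s) s t := by
      simpa using ((hasDerivAt_id t).smul_const s).const_add x
    have hdF : DifferentiableAt ℝ (iteratedFDeriv ℝ (i+2) f) (x + t • s) :=
      (hf.differentiable_iteratedFDeriv (m := i+2)
        (WithTop.coe_lt_coe.mpr (by exact_mod_cast (show i+2 < P+2 by omega)))) _
    have h1 : HasDerivAt (fun τ : ℝ => iteratedFDeriv ℝ (i+2) f (x + τ • s))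
        (fderiv ℝ (iteratedFDeriv ℝ (i+2) f) (x + t • s) s) t :=
      (hdF.hasFDerivAt).comp_hasDerivAt t hy
    have h2 : HasDerivAt (φ i)
        ((fderiv ℝ (iteratedFDeriv ℝ (i+2) f) (x + t • s) s) (dvec i s u v)) t :=
      (ContinuousMultilinearMap.apply ℝ (fun _ : Fin (i+2) => E) ℝ
        (dvec i s u v)).hasFDerivAt.comp_hasDerivAt t h1
    convert h2 using 1
    show φ (i+1) t = _
    rw [show φ (i+1) t = iteratedFDeriv ℝ (i+3) f (x + t • s) (dvec (i+1) s u v) from rfl,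
      ← dvec_cons]
    rw [iteratedFDeriv_succ_apply_left]
    simp
  -- base estimate
  have hbase : ∀ t ∈ Set.Icc (0:ℝ) 1, |φ P t - φ P 0| ≤ C * t := by
    intro t ht
    have heq : φ P t - φ P 0
        = (iteratedFDeriv ℝ (P+2) f (x + t • s) - iteratedFDeriv ℝ (P+2) f (x + (0:ℝ) • s))
            (dvec P s u v) := by
      rw [ContinuousMultilinearMap.sub_apply]
    rw [heq]
    have h1 := (iteratedFDeriv ℝ (P+2) f (x + t • s)
        - iteratedFDeriv ℝ (P+2) f (x + (0:ℝ) • s)).le_opNorm (dvec P s u v)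
    rw [prod_norm_dvec] at h1
    have h2 : ‖iteratedFDeriv ℝ (P+2) f (x + t • s) - iteratedFDeriv ℝ (P+2) f (x + (0:ℝ) • s)‖
        ≤ ((P+1).factorial : ℝ) * L * (t * ‖s‖) := by
      have := hLip (x + t • s) (x + (0:ℝ) • s)
      have heq2 : x + t • s - (x + (0:ℝ) • s) = t • s := by
        simp
      rw [heq2, norm_smul, Real.norm_eq_abs, abs_of_nonneg ht.1] at this
      exact this
    rw [Real.norm_eq_abs] at h1
    calc |(iteratedFDeriv ℝ (P+2) f (x + t • s) - iteratedFDeriv ℝ (P+2) f (x + (0:ℝ) • s))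
          (dvec P s u v)|
        ≤ ‖iteratedFDeriv ℝ (P+2) f (x + t • s) - iteratedFDeriv ℝ (P+2) f (x + (0:ℝ) • s)‖
            * (‖s‖^P * ‖u‖ * ‖v‖) := h1
      _ ≤ (((P+1).factorial : ℝ) * L * (t * ‖s‖)) * (‖s‖^P * ‖u‖ * ‖v‖) := by
          apply mul_le_mul_of_nonneg_right h2 (by positivity)
      _ = C * t := by rw [hC]; ring
  -- main downward induction
  have main : ∀ d : ℕ, ∀ i : ℕ, i + d = P → ∀ t ∈ Set.Icc (0:ℝ) 1,
      |φ i t - ∑ r ∈ Finset.range (d+1), (t^r / (r.factorial:ℝ)) * φ (i+r) 0|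
        ≤ C * t^(d+1) / ((d+1).factorial : ℝ) := by
    intro d
    induction d with
    | zero =>
      intro i hi t ht
      have hiP : i = P := by omega
      subst hiP
      have hs : (∑ r ∈ Finset.range 1, (t^r / (r.factorial:ℝ)) * φ (i+r) 0) = φ i 0 := by
        simp
      rw [hs]
      simpa using hbase t ht
    | succ d IH =>
      intro i hi t ht
      set g : ℝ → ℝ := fun τ => φ i τ
        - ∑ r ∈ Finset.range (d+2), (τ^r / (r.factorial:ℝ)) * φ (i+r) 0 with hgdef
      have hg : ∀ τ : ℝ, HasDerivAt g
          (φ (i+1) τ - ∑ r ∈ Finset.range (d+1), (τ^r / (r.factorial:ℝ)) * φ (i+1+r) 0) τ := by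
        intro τ
        have h1 : HasDerivAt (φ i) (φ (i+1) τ) τ := hφd i (by omega) τ
        have h3 : HasDerivAt (fun τ' : ℝ =>
            ∑ r ∈ Finset.range (d+2), (τ'^r / (r.factorial:ℝ)) * φ (i+r) 0)
            (∑ r ∈ Finset.range (d+2), (((r:ℝ) * τ^(r-1)) / (r.factorial:ℝ)) * φ (i+r) 0) τ := by
          apply HasDerivAt.fun_sum
          intro r hr
          exact ((hasDerivAt_pow r τ).div_const (r.factorial : ℝ)).mul_const _
        have h4 : (∑ r ∈ Finset.range (d+2), (((r:ℝ) * τ^(r-1)) / (r.factorial:ℝ)) * φ (i+r) 0)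
            = ∑ r ∈ Finset.range (d+1), (τ^r / (r.factorial:ℝ)) * φ (i+1+r) 0 := by
          rw [Finset.sum_range_succ']
          have h0 : (((0:ℕ):ℝ) * τ^(0-1) / ((Nat.factorial 0 : ℕ):ℝ)) * φ (i+0) 0 = 0 := by
            simp
          rw [h0, add_zero]
          apply Finset.sum_congr rfl
          intro r hr
          have hfac : ((r+1).factorial : ℝ) = ((r:ℝ)+1) * (r.factorial : ℝ) := by
            exact_mod_cast Nat.factorial_succ r
          have hr0 : (r.factorial : ℝ) ≠ 0 := by exact_mod_cast r.factorial_ne_zero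
          have hre : i + 1 + r = i + (r+1) := by omega
          rw [hre, hfac]
          push_cast
          field_simp
        rw [← h4]
        exact h1.sub h3
      set B : ℝ → ℝ := fun τ => C * τ^(d+2) / ((d+2).factorial : ℝ) with hBdef
      have hB : ∀ τ : ℝ, HasDerivAt B (C * τ^(d+1) / ((d+1).factorial:ℝ)) τ := by
        intro τ
        have h5 := ((hasDerivAt_pow (d+2) τ).const_mul C).div_const ((d+2).factorial : ℝ)
        refine h5.congr_deriv ?_
        have hfac : ((d+2).factorial : ℝ) = ((d:ℝ)+2) * ((d+1).factorial : ℝ) := by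
          exact_mod_cast Nat.factorial_succ (d+1)
        have hd0 : ((d+1).factorial : ℝ) ≠ 0 := by exact_mod_cast (d+1).factorial_ne_zero
        rw [hfac]
        push_cast
        field_simp
      have hg0 : g 0 = 0 := by
        rw [hgdef]
        simp only []
        rw [Finset.sum_range_succ']
        simp [zero_pow]
      have happ := image_norm_le_of_norm_deriv_right_le_deriv_boundary
        (f := g)
        (f' := fun τ => φ (i+1) τ
          - ∑ r ∈ Finset.range (d+1), (τ^r / (r.factorial:ℝ)) * φ (i+1+r) 0)
        (a := 0) (b := 1)
        (fun τ _ => (hg τ).continuousAt.continuousWithinAt)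
        (fun τ _ => (hg τ).hasDerivWithinAt)
        (by rw [hg0]; simp [hBdef])
        hB
        (fun τ hτ => by
          rw [Real.norm_eq_abs]
          exact IH (i+1) (by omega) τ (Set.Ico_subset_Icc_self hτ))
      have := happ ht
      rw [Real.norm_eq_abs] at this
      exact this
  -- conclusion
  have hfinal := main P 0 (by omega) 1 (by norm_num)
  have h1 : φ 0 1 = iteratedFDeriv ℝ 2 f (x + s) (dvec 0 s u v) := by
    rw [hφ]; simp
  have h2 : ∀ r, φ r 0 = iteratedFDeriv ℝ (r+2) f x (dvec r s u v) := by
    intro r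
    rw [hφ]; simp
  rw [h1] at hfinal
  have h3 : (∑ r ∈ Finset.range (P+1), ((1:ℝ)^r / (r.factorial:ℝ)) * φ (0+r) 0)
      = ∑ r ∈ Finset.range (P+1), (1/(r.factorial:ℝ)) * iteratedFDeriv ℝ (r+2) f x (dvec r s u v) := by
    apply Finset.sum_congr rfl
    intro r _
    rw [show 0 + r = r from by omega, h2 r, one_pow]
  rw [h3] at hfinal
  have h4 : C * 1^(P+1) / ((P+1).factorial : ℝ) = L * ‖s‖^(P+1) * ‖u‖ * ‖v‖ := by
    have hP0 : ((P+1).factorial : ℝ) ≠ 0 := by exact_mod_cast (P+1).factorial_ne_zero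
    rw [hC, one_pow]
    field_simp
  rw [h4] at hfinal
  exact hfinal


end DerivBound

theorem stmt2 {n : ℕ} (p : ℕ) (hp : 2 ≤ p) (f : EuclideanSpace ℝ (Fin n) → ℝ)
    (L : ℝ) (hL : 0 ≤ L) (hf : ContDiff ℝ (p : ℕ∞) f)
    (hLip : ∀ x y : EuclideanSpace ℝ (Fin n),
      ‖iteratedFDeriv ℝ p f x - iteratedFDeriv ℝ p f y‖ ≤ ((p - 1).factorial : ℝ) * L * ‖x - y‖) :
    ∀ x s : EuclideanSpace ℝ (Fin n),
      ‖iteratedFDeriv ℝ 2 f (x + s) - iteratedFDeriv ℝ 2 (fun s' => taylorP p f x s') s‖ ≤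
        ((p : ℝ) - 1) * L * ‖s‖ ^ (p - 1) := by
  intro x s
  obtain ⟨P, rfl⟩ : ∃ P, p = P + 2 := ⟨p - 2, by omega⟩
  have hsub : P + 2 - 1 = P + 1 := by omega
  have hsym : ∀ (j : ℕ), j ≤ P + 2 →
      ∀ (σ : Equiv.Perm (Fin j)) (w : Fin j → EuclideanSpace ℝ (Fin n)),
      iteratedFDeriv ℝ j f x (w ∘ σ) = iteratedFDeriv ℝ j f x w := by
    intro j hj σ w
    refine iteratedFDeriv_perm_invariant j f (hf.of_le ?_) x σ w
    exact WithTop.coe_le_coe.mpr (by exact_mod_cast hj)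
  have hLip' : ∀ a b : EuclideanSpace ℝ (Fin n),
      ‖iteratedFDeriv ℝ (P+2) f a - iteratedFDeriv ℝ (P+2) f b‖
        ≤ ((P+1).factorial : ℝ) * L * ‖a - b‖ := by
    intro a b
    have h := hLip a b
    rwa [hsub] at h
  have hb : ‖iteratedFDeriv ℝ 2 f (x + s)
      - iteratedFDeriv ℝ 2 (fun s' => taylorP (P+2) f x s') s‖ ≤ L * ‖s‖^(P+1) := by
    apply ContinuousMultilinearMap.opNorm_le_bound (by positivity)
    intro m
    rw [ContinuousMultilinearMap.sub_apply, taylor_hessian P f x hsym s m]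
    have hAm : iteratedFDeriv ℝ 2 f (x+s) m
        = iteratedFDeriv ℝ 2 f (x+s) (dvec 0 s (m 0) (m 1)) := by
      congr 1
      exact dvec_zero_eq s m
    rw [hAm, Real.norm_eq_abs, Fin.prod_univ_two]
    have hd := deriv_bound P f L hL hf hLip' x s (m 0) (m 1)
    calc |iteratedFDeriv ℝ 2 f (x + s) (dvec 0 s (m 0) (m 1))
          - ∑ r ∈ Finset.range (P+1),
              (1/(r.factorial:ℝ)) * iteratedFDeriv ℝ (r+2) f x (dvec r s (m 0) (m 1))|
        ≤ L * ‖s‖^(P+1) * ‖m 0‖ * ‖m 1‖ := hd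
      _ = L * ‖s‖^(P+1) * (‖m 0‖ * ‖m 1‖) := by ring
  rw [hsub]
  have h1 : (1:ℝ) ≤ ((P+2:ℕ):ℝ) - 1 := by push_cast; linarith [Nat.cast_nonneg (α := ℝ) P]
  calc ‖iteratedFDeriv ℝ 2 f (x + s)
        - iteratedFDeriv ℝ 2 (fun s' => taylorP (P+2) f x s') s‖
      ≤ L * ‖s‖^(P+1) := hb
    _ ≤ (((P+2:ℕ):ℝ) - 1) * (L * ‖s‖^(P+1)) := le_mul_of_one_le_left (by positivity) h1
    _ = (((P+2:ℕ):ℝ) - 1) * L * ‖s‖^(P+1) := by ring
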